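/- Nanjundiah's identity: for nonnegative integers $m,n,p,q$, $\binom{m}{p}\binom{n}{q} = \sum_{j}\binom{n+j}{p+q}\binom{m-n+q}{j}\binom{n-m+p}{p-j}$, interpreted with generalized binomial coefficients (binomials with possibly negative upper argument). -/

import Mathlib

noncomputable def zchoose (a : ℤ) (k : ℕ) : ℚ :=
  (∏ i ∈ Finset.range k, ((a : ℚ) - i)) / k.factorial

lemma zchoose_zero (a : ℤ) : zchoose a 0 = 1 := by simp [zchoose]

lemma zchoose_succ (a : ℤ) (k : ℕ) :
    zchoose a (k + 1) = zchoose a k * ((a : ℚ) - k) / (k + 1) := by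
  unfold zchoose
  rw [Finset.prod_range_succ, Nat.factorial_succ]
  push_cast
  rw [div_mul_eq_mul_div, div_div, mul_comm ((k:ℚ)+1)]

lemma zchoose_pascal (a : ℤ) (k : ℕ) :
    zchoose (a + 1) (k + 1) = zchoose a (k + 1) + zchoose a k := by
  unfold zchoose
  rw [Finset.prod_range_succ', Finset.prod_range_succ]
  have h0 : ∀ i : ℕ, ((a + 1 : ℤ) : ℚ) - ((i : ℕ) + 1 : ℕ) = (a : ℚ) - i := by
    intro i; push_cast; ring
  rw [Finset.prod_congr rfl fun i _ => h0 i]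
  have h1 : (k.factorial : ℚ) ≠ 0 := by positivity
  have h2 : ((k : ℚ) + 1) ≠ 0 := by positivity
  rw [Nat.factorial_succ]
  push_cast
  field_simp
  ring

lemma zchoose_natCast (m : ℕ) : ∀ k : ℕ, zchoose (m : ℤ) k = m.choose k := by
  induction m with
  | zero =>
    intro k
    cases k with
    | zero => simp [zchoose_zero]
    | succ k => simp [zchoose, Finset.prod_range_succ']
  | succ m ih =>
    intro k
    cases k with
    | zero => simp [zchoose_zero]
    | succ k =>
      have h : ((m + 1 : ℕ) : ℤ) = (m : ℤ) + 1 := by push_cast; ring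
      rw [h, zchoose_pascal, ih, ih, Nat.choose_succ_succ]
      push_cast; ring

set_option maxHeartbeats 4000000 in
lemma key (q : ℕ) : ∀ (p : ℕ) (a b : ℤ),
    (∑ j ∈ Finset.range (p + 1),
      zchoose (b + j) (p + q) * zchoose (a - b + q) j * zchoose (b - a + p) (p - j))
      = zchoose a p * zchoose b q := by
  intro p
  induction p with
  | zero => intro a b; simp [zchoose_zero]
  | succ p ih =>
    intro a b
    have hp1 : ((p : ℚ) + 1) ≠ 0 := by positivity
    apply mul_left_cancel₀ hp1
    set g : ℕ → ℚ := fun i =>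
      if i ≤ p + 1 then
        -(i : ℚ) * (zchoose (b + i) (p + q + 1) * zchoose (a - b + q) i *
          zchoose (b - a + p) (p + 1 - i))
      else 0 with hg
    have main : ∀ i ∈ Finset.range (p + 2),
        ((p : ℚ) + 1) * (zchoose (b + i) (p + 1 + q) * zchoose (a - b + q) i *
            zchoose (b - a + (p + 1 : ℕ)) (p + 1 - i))
          = ((a : ℚ) - p) * (if i ≤ p then
              zchoose (b + i) (p + q) * zchoose (a - b + q) i *
                zchoose (b - a + p) (p - i) else 0)
            + (g (i + 1) - g i) := by
      intro i hi
      simp only [Finset.mem_range] at hi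
      by_cases h : i ≤ p
      · obtain ⟨k, hk⟩ := Nat.exists_eq_add_of_le h
        subst hk
        rw [if_pos h]
        simp only [hg]
        rw [if_pos (by omega : i + 1 ≤ i + k + 1), if_pos (by omega : i ≤ i + k + 1)]
        rw [show i + k + 1 - i = k + 1 from by omega,
            show i + k - i = k from by omega,
            show i + k + 1 - (i + 1) = k from by omega,
            show i + k + 1 + q = i + k + 1 + q from rfl]
        push_cast
        simp only [← add_assoc]
        rw [show i + k + 1 + q = (i + k + q) + 1 from by omega]
        rw [zchoose_pascal (b + i) (i + k + q)]
        rw [zchoose_pascal (b - a + i + k) k]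
        rw [zchoose_succ (b + i) (i + k + q)]
        rw [zchoose_succ (a - b + q) i]
        rw [zchoose_succ (b - a + i + k) k]
        have h1 : ((i : ℚ) + k + q + 1) ≠ 0 := by positivity
        have h2 : ((i : ℚ) + 1) ≠ 0 := by positivity
        have h3 : ((k : ℚ) + 1) ≠ 0 := by positivity
        push_cast
        field_simp
        ring
      · have hi' : i = p + 1 := by omega
        subst hi'
        rw [if_neg h]
        simp only [hg]
        rw [if_neg (by omega : ¬ (p + 1 + 1 ≤ p + 1)), if_pos (le_refl (p + 1))]
        rw [show p + 1 - (p + 1) = 0 from by omega]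
        rw [zchoose_zero, zchoose_zero]
        rw [show p + 1 + q = p + q + 1 from by omega]
        push_cast
        ring
    calc ((p : ℚ) + 1) * ∑ j ∈ Finset.range (p + 1 + 1),
          zchoose (b + j) (p + 1 + q) * zchoose (a - b + q) j *
            zchoose (b - a + (p + 1 : ℕ)) (p + 1 - j)
        = ∑ j ∈ Finset.range (p + 2),
            (((p : ℚ) + 1) * (zchoose (b + j) (p + 1 + q) * zchoose (a - b + q) j *
              zchoose (b - a + (p + 1 : ℕ)) (p + 1 - j))) := by
          rw [Finset.mul_sum]
      _ = ∑ j ∈ Finset.range (p + 2),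
            (((a : ℚ) - p) * (if j ≤ p then
              zchoose (b + j) (p + q) * zchoose (a - b + q) j *
                zchoose (b - a + p) (p - j) else 0)
              + (g (j + 1) - g j)) := Finset.sum_congr rfl main
      _ = ((a : ℚ) - p) * (∑ j ∈ Finset.range (p + 2),
              (if j ≤ p then zchoose (b + j) (p + q) * zchoose (a - b + q) j *
                zchoose (b - a + p) (p - j) else 0))
            + (g (p + 2) - g 0) := by
          rw [Finset.sum_add_distrib, Finset.sum_range_sub g, Finset.mul_sum]
      _ = ((a : ℚ) - p) * (∑ j ∈ Finset.range (p + 1),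
              zchoose (b + j) (p + q) * zchoose (a - b + q) j *
                zchoose (b - a + p) (p - j)) := by
          rw [Finset.sum_range_succ, if_neg (by omega : ¬ (p + 1 ≤ p))]
          have h0 : g (p + 2) = 0 := by simp only [hg]; rw [if_neg (by omega)]
          have h1 : g 0 = 0 := by simp only [hg]; rw [if_pos (by omega)]; push_cast; ring
          rw [h0, h1]
          have : ∀ j ∈ Finset.range (p + 1),
              (if j ≤ p then zchoose (b + j) (p + q) * zchoose (a - b + q) j *
                zchoose (b - a + p) (p - j) else 0)
              = zchoose (b + j) (p + q) * zchoose (a - b + q) j *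
                zchoose (b - a + p) (p - j) := by
            intro j hj
            simp only [Finset.mem_range] at hj
            rw [if_pos (by omega)]
          rw [Finset.sum_congr rfl this]
          ring
      _ = ((a : ℚ) - p) * (zchoose a p * zchoose b q) := by rw [ih]
      _ = ((p : ℚ) + 1) * (zchoose a (p + 1) * zchoose b q) := by
          rw [zchoose_succ]
          field_simp

theorem nanjundiah_identity (m n p q : ℕ) :
    (m.choose p : ℚ) * (n.choose q : ℚ) =
      ∑ j ∈ Finset.range (p + 1),
        zchoose ((n : ℤ) + j) (p + q) * zchoose ((m : ℤ) - n + q) j *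
          zchoose ((n : ℤ) - m + p) (p - j) := by
  rw [← zchoose_natCast m p, ← zchoose_natCast n q, ← key q p (m : ℤ) (n : ℤ)]
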